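/- If the all-to-all traffic matrix (with demand 1/n between every ordered pair of n servers) is feasible in a capacitated graph G with throughput t, then every hose-model traffic matrix (each server sends at most 1 unit total and receives at most 1 unit total) is feasible in G with throughput at least t/2. -/

import Mathlib

open Finset

/-- A multicommodity flow `f s t u v` (flow of commodity `(s,t)` on directed link `(u,v)`)
routing demand `D` in a network with capacities `c`. -/
def IsFlow {V : Type*} [Fintype V] (c D : V → V → ℝ) (f : V → V → V → V → ℝ) : Prop :=
  (∀ s t u v, 0 ≤ f s t u v) ∧
  (∀ u v, (∑ s : V, ∑ t : V, f s t u v) ≤ c u v) ∧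
  (∀ s t u, u ≠ s → u ≠ t → (∑ v : V, f s t v u) = ∑ v : V, f s t u v) ∧
  (∀ s t, s ≠ t → (∑ v : V, f s t s v) - (∑ v : V, f s t v s) = D s t)

/-- The traffic matrix `D` is feasible in the network with capacities `c`. -/
def Feasible {V : Type*} [Fintype V] (c D : V → V → ℝ) : Prop := ∃ f, IsFlow c D f

/-- Hose model: each server sends at most 1 unit in total and receives at most 1 unit. -/
def Hose {V : Type*} [Fintype V] (T : V → V → ℝ) : Prop :=
  (∀ v w, 0 ≤ T v w) ∧ (∀ v, (∑ w : V, T v w) ≤ 1) ∧ (∀ v, (∑ w : V, T w v) ≤ 1)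

/-- If the all-to-all TM (demand `1/n` between every ordered pair) is feasible with
throughput `t`, then every hose-model TM is feasible with throughput at least `t/2`. -/
theorem allToAll_throughput_implies_hose_half {V : Type*} [Fintype V]
    (c : V → V → ℝ) (t : ℝ) (ht : 0 ≤ t)
    (hA2A : Feasible c (fun _ _ => t * (1 / (Fintype.card V : ℝ))))
    (T : V → V → ℝ) (hT : Hose T) :
    Feasible c (fun v w => (t / 2) * T v w) := by
  classical
  obtain ⟨f, hf0, hfc, hfcons, hfdem⟩ := hA2A
  obtain ⟨hT0, hTrow, hTcol⟩ := hT
  set n : ℝ := (Fintype.card V : ℝ) with hn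
  -- `h a b` is the all-to-all flow for commodity (a,b), zeroed out when a = b
  set h : V → V → V → V → ℝ := fun a b u v => if a = b then 0 else f a b u v with hh
  have h0 : ∀ a b u v, 0 ≤ h a b u v := by
    intro a b u v
    simp only [hh]
    split
    · exact le_refl 0
    · exact hf0 a b u v
  have hle : ∀ a b u v, h a b u v ≤ f a b u v := by
    intro a b u v
    simp only [hh]
    split
    · exact hf0 a b u v
    · exact le_refl _
  have hcons : ∀ a b u, u ≠ a → u ≠ b → (∑ v, h a b v u) = ∑ v, h a b u v := by
    intro a b u hua hub
    by_cases hab : a = b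
    · simp [hh, hab]
    · simpa [hh, hab] using hfcons a b u hua hub
  have hsrc : ∀ a b, a ≠ b → (∑ v, h a b a v) - (∑ v, h a b v a) = t * (1 / n) := by
    intro a b hab
    simpa [hh, hab] using hfdem a b hab
  have hsnk : ∀ a b, a ≠ b → (∑ v, h a b v b) - (∑ v, h a b b v) = t * (1 / n) := by
    intro a b hab
    have htot : ∑ u, ((∑ v, f a b u v) - (∑ v, f a b v u)) = 0 := by
      rw [Finset.sum_sub_distrib, Finset.sum_comm]
      ring
    have hsplit : ∑ u ∈ (Finset.univ : Finset V) \ {a, b},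
        ((∑ v, f a b u v) - (∑ v, f a b v u)) = 0 := by
      apply Finset.sum_eq_zero
      intro u hu
      simp only [Finset.mem_sdiff, Finset.mem_insert, Finset.mem_singleton] at hu
      push_neg at hu
      rw [hfcons a b u hu.2.1 hu.2.2]
      ring
    have hpair : ∑ u ∈ ({a, b} : Finset V),
        ((∑ v, f a b u v) - (∑ v, f a b v u)) =
        ((∑ v, f a b a v) - (∑ v, f a b v a)) + ((∑ v, f a b b v) - (∑ v, f a b v b)) :=
      Finset.sum_pair hab
    have hsdiff := Finset.sum_sdiff (f := fun u => (∑ v, f a b u v) - (∑ v, f a b v u))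
      (Finset.subset_univ ({a, b} : Finset V))
    have hda := hfdem a b hab
    simp only at hda
    have : (∑ v, f a b v b) - (∑ v, f a b b v) = t * (1 / n) := by
      rw [hsplit, hpair] at hsdiff
      rw [htot] at hsdiff
      linarith
    simpa [hh, hab] using this
  -- the VLB flow
  refine ⟨fun s t' u v => (T s t' / 2) * ∑ m, (h s m u v + h m t' u v), ?_, ?_, ?_, ?_⟩
  · -- nonnegativity
    intro s t' u v
    apply mul_nonneg (by linarith [hT0 s t'])
    exact Finset.sum_nonneg fun m _ => add_nonneg (h0 _ _ _ _) (h0 _ _ _ _)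
  · -- capacity
    intro u v
    have key : ∑ s, ∑ t', (T s t' / 2) * ∑ m, (h s m u v + h m t' u v)
        = (∑ s, (∑ t', T s t') / 2 * ∑ m, h s m u v)
          + ∑ t', (∑ s, T s t') / 2 * ∑ m, h m t' u v := by
      calc ∑ s, ∑ t', (T s t' / 2) * ∑ m, (h s m u v + h m t' u v)
          = ∑ s, ∑ t', ((T s t' / 2) * ∑ m, h s m u v
              + (T s t' / 2) * ∑ m, h m t' u v) := by
            apply Finset.sum_congr rfl; intro s _
            apply Finset.sum_congr rfl; intro t' _
            rw [Finset.sum_add_distrib, mul_add]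
        _ = (∑ s, ∑ t', (T s t' / 2) * ∑ m, h s m u v)
              + ∑ s, ∑ t', (T s t' / 2) * ∑ m, h m t' u v := by
            simp [Finset.sum_add_distrib]
        _ = (∑ s, (∑ t', T s t') / 2 * ∑ m, h s m u v)
              + ∑ t', (∑ s, T s t') / 2 * ∑ m, h m t' u v := by
            congr 1
            · apply Finset.sum_congr rfl; intro s _
              rw [← Finset.sum_mul, Finset.sum_div]
            · rw [Finset.sum_comm]
              apply Finset.sum_congr rfl; intro t' _
              rw [← Finset.sum_mul, Finset.sum_div]
    rw [key]
    have hA : ∀ s : V, (0:ℝ) ≤ ∑ m, h s m u v :=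
      fun s => Finset.sum_nonneg fun m _ => h0 _ _ _ _
    have hB : ∀ t' : V, (0:ℝ) ≤ ∑ m, h m t' u v :=
      fun t' => Finset.sum_nonneg fun m _ => h0 _ _ _ _
    have h1 : (∑ s, (∑ t', T s t') / 2 * ∑ m, h s m u v)
        ≤ ∑ s, (1/2) * ∑ m, h s m u v := by
      apply Finset.sum_le_sum
      intro s _
      apply mul_le_mul_of_nonneg_right _ (hA s)
      linarith [hTrow s]
    have h2 : (∑ t', (∑ s, T s t') / 2 * ∑ m, h m t' u v)
        ≤ ∑ t', (1/2) * ∑ m, h m t' u v := by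
      apply Finset.sum_le_sum
      intro t' _
      apply mul_le_mul_of_nonneg_right _ (hB t')
      linarith [hTcol t']
    have h3 : (∑ s, (1/2:ℝ) * ∑ m, h s m u v) + ∑ t', (1/2:ℝ) * ∑ m, h m t' u v
        ≤ ∑ s, ∑ t', f s t' u v := by
      have e1 : ∑ t' : V, (1/2:ℝ) * ∑ m, h m t' u v = ∑ m, (1/2:ℝ) * ∑ t', h m t' u v := by
        rw [← Finset.mul_sum, ← Finset.mul_sum, Finset.sum_comm]
      rw [e1, ← Finset.sum_add_distrib]
      apply Finset.sum_le_sum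
      intro s _
      have : (1/2:ℝ) * ∑ m, h s m u v + (1/2:ℝ) * ∑ t', h s t' u v = ∑ t', h s t' u v := by
        ring
      rw [this]
      exact Finset.sum_le_sum fun t' _ => hle s t' u v
    calc _ ≤ (∑ s, (1/2:ℝ) * ∑ m, h s m u v) + ∑ t', (1/2:ℝ) * ∑ m, h m t' u v :=
          add_le_add h1 h2
      _ ≤ ∑ s, ∑ t', f s t' u v := h3
      _ ≤ c u v := hfc u v
  · -- conservation
    intro s t' u hus hut
    rw [← Finset.mul_sum, ← Finset.mul_sum]
    congr 1
    rw [Finset.sum_comm, Finset.sum_comm (f := fun v m => h s m u v + h m t' u v)]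
    apply Finset.sum_congr rfl
    intro m _
    rw [Finset.sum_add_distrib, Finset.sum_add_distrib]
    by_cases hmu : m = u
    · subst hmu
      have e1 := hsnk s m (Ne.symm hus)
      have e2 := hsrc m t' hut
      linarith
    · rw [hcons s m u hus (Ne.symm hmu), hcons m t' u (Ne.symm hmu) hut]
  · -- demand
    intro s t' hst
    simp only
    rw [← Finset.mul_sum, ← Finset.mul_sum, ← mul_sub]
    have hnpos : (0:ℝ) < n := by
      have : Nonempty V := ⟨s⟩
      simp only [hn]
      exact_mod_cast Fintype.card_pos
    have key : (∑ v, ∑ m, (h s m s v + h m t' s v)) - ∑ v, ∑ m, (h s m v s + h m t' v s)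
        = t := by
      rw [Finset.sum_comm, Finset.sum_comm (f := fun v m => h s m v s + h m t' v s),
        ← Finset.sum_sub_distrib]
      have each : ∀ m : V, ((∑ v, (h s m s v + h m t' s v)) - ∑ v, (h s m v s + h m t' v s))
          = t * (1 / n) := by
        intro m
        rw [Finset.sum_add_distrib, Finset.sum_add_distrib]
        by_cases hms : m = s
        · subst hms
          have e1 : ∀ v, h m m m v = 0 := by intro v; simp [hh]
          have e2 : ∀ v, h m m v m = 0 := by intro v; simp [hh]
          have e3 := hsrc m t' hst
          simp only [Finset.sum_congr rfl fun v _ => e1 v,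
            Finset.sum_congr rfl fun v _ => e2 v, Finset.sum_const_zero]
          linarith
        · have e1 := hsrc s m (fun hsm => hms hsm.symm)
          have e2 := hcons m t' s (fun hsm => hms hsm.symm) hst
          linarith
      rw [Finset.sum_congr rfl fun m _ => each m, Finset.sum_const, Finset.card_univ, nsmul_eq_mul]
      rw [hn] at *
      field_simp
    rw [key]
    ring
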